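/- Let G ∈ ℂ^{n×n} be a unitary matrix that is CMV structured with block size k, with factorization G = G₁G₂ into block diagonal unitary factors as in the CMV factorization lemma, let Z ∈ ℂ^{n×k}, let E = [I_k; 0_{(n−k)×k}] ∈ ℂ^{n×k}, and set A = Gᵀ + E Z^H. Then A = G₂ᵀ (I_n + E Z̃^H) G₁ᵀ, where Z̃^H = Z^H · conj(G₁) (conj denoting the entrywise complex conjugate); moreover both G₁ᵀ and G₂ᵀ are unitary matrices with bandwidth k. -/
import Mathlib


open Matrix

lemma blk_lt {m k : ℕ} (i : Fin m) (a : Fin k) : i.1 * k + a.1 < m * k := by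
  have h1 : i.1 * k + a.1 < (i.1 + 1) * k := by
    have := a.2
    rw [Nat.add_mul]
    omega
  have h2 : (i.1 + 1) * k ≤ m * k := Nat.mul_le_mul_right _ i.2
  omega

/-- The `(i,j)`-th (0-based) `k × k` block of an `(m·k) × (m·k)` matrix. -/
def blk {m k : ℕ} (G : Matrix (Fin (m * k)) (Fin (m * k)) ℂ) (i j : Fin m) :
    Matrix (Fin k) (Fin k) ℂ :=
  Matrix.of fun a b => G ⟨i.1 * k + a.1, blk_lt i a⟩ ⟨j.1 * k + b.1, blk_lt j b⟩

/-- A square matrix is lower triangular: the entries above the diagonal vanish. -/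
def LowerTriangular {k : ℕ} (M : Matrix (Fin k) (Fin k) ℂ) : Prop :=
  ∀ a b : Fin k, a < b → M a b = 0

/-- A square matrix is upper triangular: the entries below the diagonal vanish. -/
def UpperTriangular {k : ℕ} (M : Matrix (Fin k) (Fin k) ℂ) : Prop :=
  ∀ a b : Fin k, b < a → M a b = 0

/-- `G ∈ ℂ^{n×n}` (with `n = 2sk`), partitioned into `k × k` blocks `G_{ij}`
(`1 ≤ i,j ≤ 2s`), is *CMV structured with block size `k`* if `G_{ij} = 0`
whenever `j < 2⌈i/2⌉ − 2` or `j > 2⌈i/2⌉ + 1`, the blocks `G_{2p−1,2p+1}`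
(`1 ≤ p ≤ s−1`) are nonsingular lower triangular, and the blocks `G_{2,1}` and
`G_{2p,2p−2}` (`2 ≤ p ≤ s`) are nonsingular upper triangular.
(Below, block indices are 0-based: block `(i₀,j₀)` corresponds to `(i₀+1, j₀+1)`,
and `⌈(i₀+1)/2⌉ = (i₀+2)/2` with natural division.) -/
def IsCMV (s k : ℕ) (G : Matrix (Fin (2 * s * k)) (Fin (2 * s * k)) ℂ) : Prop :=
  (∀ i j : Fin (2 * s),
      (j.1 + 3 < 2 * ((i.1 + 2) / 2) ∨ 2 * ((i.1 + 2) / 2) < j.1) → blk G i j = 0) ∧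
  (∀ p : ℕ, ∀ _ : 1 ≤ p, ∀ _ : p ≤ s - 1,
      LowerTriangular (blk G ⟨2 * p - 2, by omega⟩ ⟨2 * p, by omega⟩) ∧
      (blk G ⟨2 * p - 2, by omega⟩ ⟨2 * p, by omega⟩).det ≠ 0) ∧
  (∀ _ : 1 ≤ s,
      UpperTriangular (blk G ⟨1, by omega⟩ ⟨0, by omega⟩) ∧
      (blk G ⟨1, by omega⟩ ⟨0, by omega⟩).det ≠ 0) ∧
  (∀ p : ℕ, ∀ _ : 2 ≤ p, ∀ _ : p ≤ s,
      UpperTriangular (blk G ⟨2 * p - 1, by omega⟩ ⟨2 * p - 3, by omega⟩) ∧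
      (blk G ⟨2 * p - 1, by omega⟩ ⟨2 * p - 3, by omega⟩).det ≠ 0)

/-- The square `k × k` submatrix of `M` with top-left corner at (0-based) `(r, c)`. -/
def subsq {n : ℕ} (M : Matrix (Fin n) (Fin n) ℂ) (k r c : ℕ)
    (hr : r + k ≤ n) (hc : c + k ≤ n) : Matrix (Fin k) (Fin k) ℂ :=
  Matrix.of fun a b => M ⟨r + a.1, by omega⟩ ⟨c + b.1, by omega⟩

lemma bnd_one {m k a : ℕ} (h : a + 1 ≤ m) : a * k + k ≤ m * k := by
  calc a * k + k = (a + 1) * k := by ring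
    _ ≤ m * k := Nat.mul_le_mul_right _ h

lemma bnd_two {m k a : ℕ} (h : a + 2 ≤ m) : a * k + 2 * k ≤ m * k := by
  calc a * k + 2 * k = (a + 2) * k := by ring
    _ ≤ m * k := Nat.mul_le_mul_right _ h

/-- A square matrix has bandwidth `k`: entries with `|row − column| > k` vanish. -/
def Band (k : ℕ) {m : ℕ} (M : Matrix (Fin m) (Fin m) ℂ) : Prop :=
  ∀ a b : Fin m, (b.1 + k < a.1 ∨ a.1 + k < b.1) → M a b = 0

/-- Index (0-based) of the diagonal block of `diag(I_k, G_{2,2}, …, G_{2,s}, G_{2,s+1})`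
containing row/column `x`: block `0` is the leading `k × k` identity, blocks
`1, …, s−1` have size `2k`, block `s` is the trailing `k × k` block. -/
def blkIdx2 (k x : ℕ) : ℕ := if x < k then 0 else (x - k) / (2 * k) + 1

/-- The pair `(G₁, G₂)` is a *CMV factorization* (as in the CMV factorization lemma):
`G₁ = diag(G_{1,1}, …, G_{1,s})` and `G₂ = diag(I_k, G_{2,2}, …, G_{2,s}, G_{2,s+1})`
are block diagonal unitary matrices, `G_{2,s+1}` is a `k × k` unitary matrix, and all
other diagonal blocks are `2k × 2k` unitary matrices of bandwidth `k` whose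
`(k+1:2k, 1:k)` submatrix is nonsingular upper triangular and whose `(1:k, k+1:2k)`
submatrix is nonsingular lower triangular. -/
def IsCMVFactor (s k : ℕ) (G₁ G₂ : Matrix (Fin (2 * s * k)) (Fin (2 * s * k)) ℂ) : Prop :=
  G₁ ∈ Matrix.unitaryGroup (Fin (2 * s * k)) ℂ ∧
  G₂ ∈ Matrix.unitaryGroup (Fin (2 * s * k)) ℂ ∧
  -- `G₁` is block diagonal with `s` diagonal blocks of size `2k`
  (∀ x y : Fin (2 * s * k), x.1 / (2 * k) ≠ y.1 / (2 * k) → G₁ x y = 0) ∧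
  -- each diagonal block of `G₁` is unitary of bandwidth `k` with the corner conditions
  (∀ i : Fin s,
    subsq G₁ (2 * k) (2 * i.1 * k) (2 * i.1 * k) (bnd_two (by omega)) (bnd_two (by omega))
        ∈ Matrix.unitaryGroup (Fin (2 * k)) ℂ ∧
    Band k (subsq G₁ (2 * k) (2 * i.1 * k) (2 * i.1 * k)
        (bnd_two (by omega)) (bnd_two (by omega))) ∧
    UpperTriangular (subsq G₁ k ((2 * i.1 + 1) * k) (2 * i.1 * k)
        (bnd_one (by omega)) (bnd_one (by omega))) ∧
    (subsq G₁ k ((2 * i.1 + 1) * k) (2 * i.1 * k)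
        (bnd_one (by omega)) (bnd_one (by omega))).det ≠ 0 ∧
    LowerTriangular (subsq G₁ k (2 * i.1 * k) ((2 * i.1 + 1) * k)
        (bnd_one (by omega)) (bnd_one (by omega))) ∧
    (subsq G₁ k (2 * i.1 * k) ((2 * i.1 + 1) * k)
        (bnd_one (by omega)) (bnd_one (by omega))).det ≠ 0) ∧
  -- `G₂` is block diagonal with blocks of sizes `k, 2k, …, 2k, k`
  (∀ x y : Fin (2 * s * k), blkIdx2 k x.1 ≠ blkIdx2 k y.1 → G₂ x y = 0) ∧
  -- the leading block of `G₂` is `I_k`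
  (∀ x y : Fin (2 * s * k), x.1 < k → y.1 < k → G₂ x y = if x.1 = y.1 then 1 else 0) ∧
  -- the middle diagonal blocks of `G₂` are unitary of bandwidth `k` with corner conditions
  (∀ j : Fin (s - 1),
    subsq G₂ (2 * k) ((2 * j.1 + 1) * k) ((2 * j.1 + 1) * k)
        (bnd_two (by omega)) (bnd_two (by omega)) ∈ Matrix.unitaryGroup (Fin (2 * k)) ℂ ∧
    Band k (subsq G₂ (2 * k) ((2 * j.1 + 1) * k) ((2 * j.1 + 1) * k)
        (bnd_two (by omega)) (bnd_two (by omega))) ∧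
    UpperTriangular (subsq G₂ k ((2 * j.1 + 2) * k) ((2 * j.1 + 1) * k)
        (bnd_one (by omega)) (bnd_one (by omega))) ∧
    (subsq G₂ k ((2 * j.1 + 2) * k) ((2 * j.1 + 1) * k)
        (bnd_one (by omega)) (bnd_one (by omega))).det ≠ 0 ∧
    LowerTriangular (subsq G₂ k ((2 * j.1 + 1) * k) ((2 * j.1 + 2) * k)
        (bnd_one (by omega)) (bnd_one (by omega))) ∧
    (subsq G₂ k ((2 * j.1 + 1) * k) ((2 * j.1 + 2) * k)
        (bnd_one (by omega)) (bnd_one (by omega))).det ≠ 0) ∧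
  -- the trailing `k × k` block `G_{2,s+1}` of `G₂` is unitary
  (∀ _ : 1 ≤ s,
    subsq G₂ k ((2 * s - 1) * k) ((2 * s - 1) * k)
        (bnd_one (by omega)) (bnd_one (by omega)) ∈ Matrix.unitaryGroup (Fin k) ℂ)

/-- The `n × k` matrix `E = [I_k; 0]` whose top `k × k` block is the identity. -/
def EkM (n k : ℕ) : Matrix (Fin n) (Fin k) ℂ :=
  Matrix.of fun x j => if x.1 = j.1 then 1 else 0


lemma transpose_mem_unitary' {n : ℕ} {M : Matrix (Fin n) (Fin n) ℂ}
    (h : M ∈ Matrix.unitaryGroup (Fin n) ℂ) :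
    M.transpose ∈ Matrix.unitaryGroup (Fin n) ℂ := by
  rw [Matrix.mem_unitaryGroup_iff]
  have h' : star M * M = 1 := (Matrix.mem_unitaryGroup_iff').mp h
  have hst : star M.transpose = (star M).transpose := by
    ext i j
    simp [Matrix.star_eq_conjTranspose, Matrix.conjTranspose_apply]
  rw [hst, ← Matrix.transpose_mul, h', Matrix.transpose_one]

lemma band_transpose {k m : ℕ} {M : Matrix (Fin m) (Fin m) ℂ} (h : Band k M) :
    Band k M.transpose := by
  intro a b hab
  rw [Matrix.transpose_apply]
  exact h b a (Or.symm hab)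

lemma blkIdx2_lt {k x : ℕ} (h : x < k) : blkIdx2 k x = 0 := if_pos h

lemma blkIdx2_ge {k x : ℕ} (h : ¬ x < k) : blkIdx2 k x = (x - k) / (2 * k) + 1 := if_neg h

lemma bandG1 {s k : ℕ} {G₁ : Matrix (Fin (2*s*k)) (Fin (2*s*k)) ℂ}
    (hbd : ∀ x y : Fin (2*s*k), x.1 / (2*k) ≠ y.1 / (2*k) → G₁ x y = 0)
    (hblk : ∀ i : Fin s, Band k (subsq G₁ (2*k) (2*i.1*k) (2*i.1*k)
        (bnd_two (by omega)) (bnd_two (by omega)))) :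
    Band k G₁ := by
  intro a b hab
  rcases Nat.eq_zero_or_pos k with hk|hk
  · subst hk; exact absurd a.2 (by simp)
  by_cases hij : a.1 / (2*k) = b.1 / (2*k)
  · obtain ⟨α, hαlt, haeq⟩ : ∃ α, α < 2*k ∧ a.1 = 2*k*(a.1/(2*k)) + α :=
      ⟨a.1 % (2*k), Nat.mod_lt _ (by omega), (Nat.div_add_mod a.1 (2*k)).symm⟩
    obtain ⟨β, hβlt, hbeq⟩ : ∃ β, β < 2*k ∧ b.1 = 2*k*(a.1/(2*k)) + β := by
      refine ⟨b.1 % (2*k), Nat.mod_lt _ (by omega), ?_⟩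
      rw [hij]; exact (Nat.div_add_mod b.1 (2*k)).symm
    have ha2 := a.2
    have hb2 := b.2
    generalize hgen : a.1 / (2*k) = i at haeq hbeq
    have hring : 2*i*k = 2*k*i := by ring
    have hring2 : 2*k*s = 2*s*k := by ring
    have his : i < s := by
      have h3 : 2*k*i < 2*k*s := by omega
      exact Nat.lt_of_mul_lt_mul_left h3
    have := hblk ⟨i, his⟩ ⟨α, hαlt⟩ ⟨β, hβlt⟩ (show β + k < α ∨ α + k < β by omega)
    simp only [subsq, Matrix.of_apply] at this
    have hba : 2*i*k + α < 2*s*k := by omega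
    have hbb : 2*i*k + β < 2*s*k := by omega
    have ha' : a = (⟨2*i*k + α, hba⟩ : Fin (2*s*k)) :=
      Fin.ext (show a.1 = 2*i*k + α by omega)
    have hb' : b = (⟨2*i*k + β, hbb⟩ : Fin (2*s*k)) :=
      Fin.ext (show b.1 = 2*i*k + β by omega)
    rw [ha', hb']
    exact this
  · exact hbd a b hij

lemma bandG2 {s k : ℕ} {G₂ : Matrix (Fin (2*s*k)) (Fin (2*s*k)) ℂ}
    (hbd : ∀ x y : Fin (2*s*k), blkIdx2 k x.1 ≠ blkIdx2 k y.1 → G₂ x y = 0)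
    (hmid : ∀ j : Fin (s-1), Band k (subsq G₂ (2*k) ((2*j.1+1)*k) ((2*j.1+1)*k)
        (bnd_two (by omega)) (bnd_two (by omega)))) :
    Band k G₂ := by
  intro a b hab
  rcases Nat.eq_zero_or_pos k with hk|hk
  · subst hk; exact absurd a.2 (by simp)
  rcases Nat.eq_zero_or_pos s with hs|hs
  · subst hs; exact absurd a.2 (by simp)
  by_cases hxa : a.1 < k
  · by_cases hxb : b.1 < k
    · exact absurd hab (by omega)
    · refine hbd a b ?_
      rw [blkIdx2_lt hxa, blkIdx2_ge hxb]
      exact (Nat.succ_ne_zero _).symm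
  · by_cases hxb : b.1 < k
    · refine hbd a b ?_
      rw [blkIdx2_ge hxa, blkIdx2_lt hxb]
      exact Nat.succ_ne_zero _
    · by_cases hq : (a.1 - k) / (2*k) = (b.1 - k) / (2*k)
      · obtain ⟨α, hαlt, haeq⟩ : ∃ α, α < 2*k ∧ a.1 - k = 2*k*((a.1-k)/(2*k)) + α :=
          ⟨(a.1-k) % (2*k), Nat.mod_lt _ (by omega), (Nat.div_add_mod _ _).symm⟩
        obtain ⟨β, hβlt, hbeq⟩ : ∃ β, β < 2*k ∧ b.1 - k = 2*k*((a.1-k)/(2*k)) + β := by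
          refine ⟨(b.1-k) % (2*k), Nat.mod_lt _ (by omega), ?_⟩
          rw [hq]; exact (Nat.div_add_mod _ _).symm
        have ha2 := a.2
        have hb2 := b.2
        generalize hgen : (a.1 - k) / (2*k) = j at haeq hbeq
        by_cases hjs : j < s - 1
        · have hring : (2*j+1)*k = 2*k*j + k := by ring
          have := hmid ⟨j, hjs⟩ ⟨α, hαlt⟩ ⟨β, hβlt⟩
            (show β + k < α ∨ α + k < β by omega)
          simp only [subsq, Matrix.of_apply] at this
          have hba : (2*j+1)*k + α < 2*s*k := by omega
          have hbb : (2*j+1)*k + β < 2*s*k := by omega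
          have ha' : a = (⟨(2*j+1)*k + α, hba⟩ : Fin (2*s*k)) :=
            Fin.ext (show a.1 = (2*j+1)*k + α by omega)
          have hb' : b = (⟨(2*j+1)*k + β, hbb⟩ : Fin (2*s*k)) :=
            Fin.ext (show b.1 = (2*j+1)*k + β by omega)
          rw [ha', hb']
          exact this
        · have h1 : 2*k*(s-1) ≤ 2*k*j := Nat.mul_le_mul_left _ (by omega)
          have hsk : 2*k*(s-1) + 2*k = 2*s*k := by
            obtain ⟨s', rfl⟩ : ∃ s', s = s' + 1 := ⟨s - 1, by omega⟩
            simp only [Nat.add_sub_cancel]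
            ring
          exact absurd hab (by omega)
      · refine hbd a b ?_
        rw [blkIdx2_ge hxa, blkIdx2_ge hxb]
        exact fun h => hq (Nat.add_right_cancel h)

lemma G2T_mul_E {s k : ℕ} {G₂ : Matrix (Fin (2*s*k)) (Fin (2*s*k)) ℂ}
    (hbd : ∀ x y : Fin (2*s*k), blkIdx2 k x.1 ≠ blkIdx2 k y.1 → G₂ x y = 0)
    (hid : ∀ x y : Fin (2*s*k), x.1 < k → y.1 < k → G₂ x y = if x.1 = y.1 then 1 else 0) :
    G₂.transpose * EkM (2*s*k) k = EkM (2*s*k) k := by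
  ext x j
  rcases Nat.eq_zero_or_pos s with hs|hs
  · exact absurd x.2 (by subst hs; simp)
  rcases Nat.eq_zero_or_pos k with hk|hk
  · exact absurd x.2 (by subst hk; simp)
  have hjn : j.1 < 2*s*k := by
    have h2 : 1*k ≤ 2*s*k := Nat.mul_le_mul_right k (by omega)
    have := j.2; omega
  rw [Matrix.mul_apply, Finset.sum_eq_single (⟨j.1, hjn⟩ : Fin (2*s*k))]
  · rw [Matrix.transpose_apply]
    have hEv : EkM (2*s*k) k ⟨j.1, hjn⟩ j = 1 := by simp [EkM]
    rw [hEv, mul_one]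
    by_cases hx : x.1 < k
    · rw [hid ⟨j.1, hjn⟩ x j.2 hx]
      by_cases hxy : (x : ℕ) = (j : ℕ)
      · simp [EkM, hxy]
      · simp [EkM, hxy, Ne.symm hxy]
    · have hne : blkIdx2 k j.1 ≠ blkIdx2 k x.1 := by
        rw [blkIdx2_lt j.2, blkIdx2_ge hx]
        exact (Nat.succ_ne_zero _).symm
      rw [hbd ⟨j.1, hjn⟩ x hne]
      have : EkM (2*s*k) k x j = 0 := by
        simp only [EkM, Matrix.of_apply]
        rw [if_neg (show ¬ (x : ℕ) = (j : ℕ) by omega)]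
      rw [this]
  · intro y _ hy
    have hyj : ¬ (y : ℕ) = (j : ℕ) := fun h => hy (Fin.ext h)
    rw [Matrix.transpose_apply]
    have hEv : EkM (2*s*k) k y j = 0 := by simp [EkM, hyj]
    rw [hEv, mul_zero]
  · intro h
    exact absurd (Finset.mem_univ _) h

/-- If `G` is a unitary CMV structured matrix with block size `k`, factored as
`G = G₁ G₂` according to the CMV factorization lemma, and `A = Gᵀ + E Z^H` with
`E = [I_k; 0]`, then `A = G₂ᵀ (I + E Z̃^H) G₁ᵀ` where `Z̃^H = Z^H · conj(G₁)`;
moreover `G₁ᵀ` and `G₂ᵀ` are unitary matrices with bandwidth `k`. -/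
theorem cmv_transpose_LFR (s k : ℕ)
    (G G₁ G₂ : Matrix (Fin (2 * s * k)) (Fin (2 * s * k)) ℂ)
    (hGu : G ∈ Matrix.unitaryGroup (Fin (2 * s * k)) ℂ) (hG : IsCMV s k G)
    (hfac : IsCMVFactor s k G₁ G₂) (hprod : G = G₁ * G₂)
    (Z : Matrix (Fin (2 * s * k)) (Fin k) ℂ)
    (A : Matrix (Fin (2 * s * k)) (Fin (2 * s * k)) ℂ)
    (hA : A = G.transpose + EkM (2 * s * k) k * Z.conjTranspose) :
    A = G₂.transpose *
          (1 + EkM (2 * s * k) k * (Z.conjTranspose * G₁.map (starRingEnd ℂ))) *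
        G₁.transpose ∧
    G₁.transpose ∈ Matrix.unitaryGroup (Fin (2 * s * k)) ℂ ∧
    Band k G₁.transpose ∧
    G₂.transpose ∈ Matrix.unitaryGroup (Fin (2 * s * k)) ℂ ∧
    Band k G₂.transpose := by
  obtain ⟨hG1u, hG2u, hG1bd, hG1blk, hG2bd, hG2id, hG2mid, hG2tr⟩ := hfac
  have hb1 : Band k G₁ := bandG1 hG1bd (fun i => (hG1blk i).2.1)
  have hb2 : Band k G₂ := bandG2 hG2bd (fun j => (hG2mid j).2.1)
  refine ⟨?_, transpose_mem_unitary' hG1u, band_transpose hb1,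
    transpose_mem_unitary' hG2u, band_transpose hb2⟩
  have h1 : G₁.map (starRingEnd ℂ) * G₁.transpose = 1 := by
    have hu : G₁ * star G₁ = 1 := (Matrix.mem_unitaryGroup_iff).mp hG1u
    have hmap : G₁.map (starRingEnd ℂ) = (star G₁).transpose := by
      ext i j
      rw [Matrix.map_apply, Matrix.transpose_apply, Matrix.star_apply]
      rfl
    rw [hmap, ← Matrix.transpose_mul, hu, Matrix.transpose_one]
  have h2 := G2T_mul_E hG2bd hG2id
  rw [hA, hprod, Matrix.mul_add, Matrix.mul_one, Matrix.add_mul, Matrix.transpose_mul]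
  congr 1
  rw [show G₂.transpose * (EkM (2*s*k) k * (Z.conjTranspose * G₁.map (starRingEnd ℂ))) *
      G₁.transpose = (G₂.transpose * EkM (2*s*k) k) *
      (Z.conjTranspose * (G₁.map (starRingEnd ℂ) * G₁.transpose)) by
    simp only [Matrix.mul_assoc]]
  rw [h1, Matrix.mul_one, h2]
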